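/- arXiv:1704.01445 — 4 statements merged into one kernel-verified Lean document; each statement's English description precedes it below -/
import Mathlib

section
/- Fix a positive integer m and define the histogram kernel κ_m : [0,1] × [0,1] → ℝ by κ_m(x, x') = Σ_{j=0}^{m−1} 1[x ∈ [j/m, (j+1)/m)] · 1[x' ∈ [j/m, (j+1)/m)], and S(α) = α + (1 − α)·log(1 − α) (with the convention S(1) = 1). Then Σ_{k=1}^∞ Σ_{k'=1}^∞ (1/(k·k')) · ∫₀¹ ∫₀¹ x^k (x')^{k'} κ_m(x, x') dx dx' = Σ_{j=0}^{m−1} ( S((j+1)/m) − S(j/m) )², with the left-hand double series converging. -/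
open MeasureTheory Finset

private lemma ind_pow_eq (a b : ℝ) (n : ℕ) (x : ℝ) :
    x ^ n * (if x ∈ Set.Ico a b then (1:ℝ) else 0)
      = (Set.Ico a b).indicator (fun y => y ^ n) x := by
  by_cases h : x ∈ Set.Ico a b <;> simp [Set.indicator_apply, h]

private lemma integrable_ind_pow (a b : ℝ) (n : ℕ) :
    IntervalIntegrable (fun x : ℝ => x ^ n * (if x ∈ Set.Ico a b then (1:ℝ) else 0))
      volume 0 1 := by
  simp only [ind_pow_eq]
  rw [intervalIntegrable_iff_integrableOn_Ioc_of_le zero_le_one]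
  exact ((continuous_pow n).integrableOn_Ioc).indicator measurableSet_Ico

private lemma I1 {a b : ℝ} (ha : 0 ≤ a) (hab : a ≤ b) (hb : b ≤ 1) (n : ℕ) :
    ∫ x in (0:ℝ)..1, x ^ n * (if x ∈ Set.Ico a b then (1:ℝ) else 0)
      = (b ^ (n+1) - a ^ (n+1)) / (n+1) := by
  have h0 : (Set.Ico a b ∩ Set.Ioc 0 1 : Set ℝ) =ᵐ[volume] (Set.Ioc a b : Set ℝ) := by
    have h1 : (Set.Ico a b : Set ℝ) =ᵐ[volume] (Set.Ioc a b : Set ℝ) := Ico_ae_eq_Ioc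
    have h2 : (Set.Ioc a b ∩ Set.Ioc 0 1 : Set ℝ) = Set.Ioc a b := by
      rw [Set.inter_eq_left]
      exact fun x hx => ⟨lt_of_le_of_lt ha hx.1, hx.2.trans hb⟩
    exact (ae_eq_set_inter h1 (by rfl)).trans (Filter.EventuallyEq.of_eq h2)
  simp only [ind_pow_eq]
  rw [intervalIntegral.integral_of_le zero_le_one,
    MeasureTheory.integral_indicator measurableSet_Ico,
    Measure.restrict_restrict measurableSet_Ico, Measure.restrict_congr_set h0,
    ← intervalIntegral.integral_of_le hab, integral_pow]

private lemma telescope_hasSum :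
    HasSum (fun k : ℕ => 1 / (((k:ℝ)+1) * ((k:ℝ)+2))) 1 := by
  have hnn : ∀ k : ℕ, 0 ≤ 1 / (((k:ℝ)+1) * ((k:ℝ)+2)) := fun k => by positivity
  rw [hasSum_iff_tendsto_nat_of_nonneg hnn]
  have heq : ∀ n : ℕ, ∑ k ∈ range n, 1 / (((k:ℝ)+1) * ((k:ℝ)+2))
      = 1 - 1 / ((n:ℝ)+1) := by
    intro n
    have : ∀ k : ℕ, 1 / (((k:ℝ)+1) * ((k:ℝ)+2))
        = (fun j : ℕ => 1 / ((j:ℝ)+1)) k - (fun j : ℕ => 1 / ((j:ℝ)+1)) (k+1) := by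
      intro k
      have h1 : ((k:ℝ)+1) ≠ 0 := by positivity
      have h2 : ((k:ℝ)+2) ≠ 0 := by positivity
      push_cast
      have h3 : ((k:ℝ)+1+1) = (k:ℝ)+2 := by ring
      rw [h3, div_sub_div _ _ h1 h2]
      congr 1
      ring
    simp only [this, Finset.sum_range_sub' (fun j : ℕ => 1 / ((j:ℝ)+1)) n]
    norm_num
  simp only [heq]
  have : Filter.Tendsto (fun n : ℕ => 1 / ((n:ℝ)+1)) Filter.atTop (nhds 0) :=
    tendsto_one_div_add_atTop_nhds_zero_nat
  simpa using Filter.Tendsto.const_sub 1 this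

/-- The power series of `S`. -/
private lemma Shelp {α : ℝ} (h0 : 0 ≤ α) (h1 : α ≤ 1) :
    HasSum (fun k : ℕ => α ^ (k+2) / (((k:ℝ)+1) * ((k:ℝ)+2)))
      (α + (1 - α) * Real.log (1 - α)) := by
  rcases eq_or_lt_of_le h1 with rfl | hlt
  · simpa using telescope_hasSum
  · have habs : |α| < 1 := abs_lt.2 ⟨by linarith, hlt⟩
    have H := Real.hasSum_pow_div_log_of_abs_lt_one habs
    have H1 : HasSum (fun n : ℕ => α * (α ^ (n+1) / ((n:ℝ)+1)))
        (α * (-Real.log (1 - α))) := H.mul_left α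
    have H2' : HasSum (fun n : ℕ => α ^ (n+1+1) / ((n:ℝ)+1+1))
        (-Real.log (1 - α) - α) := by
      have := (hasSum_nat_add_iff' (f := fun n : ℕ => α ^ (n+1) / ((n:ℝ)+1)) 1).2 H
      simpa using this
    have Hc := H1.sub H2'
    have hfun : (fun n : ℕ => α * (α ^ (n+1) / ((n:ℝ)+1)) - α ^ (n+1+1) / ((n:ℝ)+1+1))
        = fun k : ℕ => α ^ (k+2) / (((k:ℝ)+1) * ((k:ℝ)+2)) := by
      funext k
      have h1 : ((k:ℝ)+1) ≠ 0 := by positivity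
      have h2 : ((k:ℝ)+1+1) ≠ 0 := by positivity
      field_simp
      ring
    rw [hfun] at Hc
    convert Hc using 1
    · rfl
    ring

private noncomputable def cfun (m : ℕ) : ℕ → ℕ → ℝ := fun i k =>
  ((((i:ℝ)+1)/m) ^ (k+2) - ((i:ℝ)/m) ^ (k+2)) / (((k:ℝ)+1) * ((k:ℝ)+2))

/-- Prior variance term `k_{*,*}` of the infinite weighted sum of raw moments under the
histogram kernel: the double series `∑_{k,k' ≥ 1} (1/(k k')) ∫∫ x^k x'^{k'} κ_m(x,x')`
converges and equals `∑_j (S((j+1)/m) - S(j/m))²` with `S(α) = α + (1-α) log(1-α)`. -/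
theorem histogram_kernel_double_tsum_moment_integral (m : ℕ) (hm : 0 < m)
    (S : ℝ → ℝ) (hS : ∀ α : ℝ, S α = α + (1 - α) * Real.log (1 - α)) :
    Summable (fun p : ℕ × ℕ => (1 / (((p.1 : ℝ) + 1) * ((p.2 : ℝ) + 1))) *
      ∫ x' in (0 : ℝ)..1, ∫ x in (0 : ℝ)..1, x ^ (p.1 + 1) * x' ^ (p.2 + 1) *
        (∑ i ∈ Finset.range m,
          (if x ∈ Set.Ico ((i : ℝ) / m) (((i : ℝ) + 1) / m) then (1 : ℝ) else 0) *
          (if x' ∈ Set.Ico ((i : ℝ) / m) (((i : ℝ) + 1) / m) then (1 : ℝ) else 0))) ∧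
    ∑' p : ℕ × ℕ, (1 / (((p.1 : ℝ) + 1) * ((p.2 : ℝ) + 1))) *
      ∫ x' in (0 : ℝ)..1, ∫ x in (0 : ℝ)..1, x ^ (p.1 + 1) * x' ^ (p.2 + 1) *
        (∑ i ∈ Finset.range m,
          (if x ∈ Set.Ico ((i : ℝ) / m) (((i : ℝ) + 1) / m) then (1 : ℝ) else 0) *
          (if x' ∈ Set.Ico ((i : ℝ) / m) (((i : ℝ) + 1) / m) then (1 : ℝ) else 0)) =
      ∑ j ∈ Finset.range m, (S (((j : ℝ) + 1) / m) - S ((j : ℝ) / m)) ^ 2 := by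

  simp only [hS]
  have hm' : (0:ℝ) < m := by exact_mod_cast hm
  have hab : ∀ i : ℕ, i ∈ Finset.range m →
      0 ≤ (i:ℝ)/m ∧ (i:ℝ)/m ≤ ((i:ℝ)+1)/m ∧ ((i:ℝ)+1)/m ≤ 1 := by
    intro i hi
    have hi' : (i:ℝ) + 1 ≤ m := by exact_mod_cast Finset.mem_range.1 hi
    refine ⟨by positivity, ?_, ?_⟩
    · apply div_le_div_of_nonneg_right ?_ hm'.le <;> try linarith
    · rw [div_le_one hm']; exact hi'
  have hA : ∀ (i : ℕ), i ∈ Finset.range m → ∀ n : ℕ,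
      (∫ x in (0:ℝ)..1, x ^ (n+1) *
        (if x ∈ Set.Ico ((i:ℝ)/m) (((i:ℝ)+1)/m) then (1:ℝ) else 0))
        = ((((i:ℝ)+1)/m) ^ (n+2) - ((i:ℝ)/m) ^ (n+2)) / ((n:ℝ)+2) := by
    intro i hi n
    obtain ⟨h1, h2, h3⟩ := hab i hi
    have h := I1 h1 h2 h3 (n+1)
    convert h using 2 <;> push_cast <;> ring
  have key : ∀ p : ℕ × ℕ,
      (1 / (((p.1 : ℝ) + 1) * ((p.2 : ℝ) + 1))) *
      ∫ x' in (0 : ℝ)..1, ∫ x in (0 : ℝ)..1, x ^ (p.1 + 1) * x' ^ (p.2 + 1) *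
        (∑ i ∈ Finset.range m,
          (if x ∈ Set.Ico ((i : ℝ) / m) (((i : ℝ) + 1) / m) then (1 : ℝ) else 0) *
          (if x' ∈ Set.Ico ((i : ℝ) / m) (((i : ℝ) + 1) / m) then (1 : ℝ) else 0))
      = ∑ i ∈ Finset.range m, cfun m i p.1 * cfun m i p.2 := by
    rintro ⟨k, k'⟩
    have hinner : ∀ x' : ℝ,
        (∫ x in (0:ℝ)..1, x ^ (k+1) * x' ^ (k'+1) *
          (∑ i ∈ Finset.range m,
            (if x ∈ Set.Ico ((i:ℝ)/m) (((i:ℝ)+1)/m) then (1:ℝ) else 0) *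
            (if x' ∈ Set.Ico ((i:ℝ)/m) (((i:ℝ)+1)/m) then (1:ℝ) else 0)))
        = ∑ i ∈ Finset.range m,
            (x' ^ (k'+1) * (if x' ∈ Set.Ico ((i:ℝ)/m) (((i:ℝ)+1)/m) then (1:ℝ) else 0)) *
            (((((i:ℝ)+1)/m) ^ (k+2) - ((i:ℝ)/m) ^ (k+2)) / ((k:ℝ)+2)) := by
      intro x'
      have hfe : (fun x : ℝ => x ^ (k+1) * x' ^ (k'+1) *
          (∑ i ∈ Finset.range m,
            (if x ∈ Set.Ico ((i:ℝ)/m) (((i:ℝ)+1)/m) then (1:ℝ) else 0) *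
            (if x' ∈ Set.Ico ((i:ℝ)/m) (((i:ℝ)+1)/m) then (1:ℝ) else 0)))
          = fun x => ∑ i ∈ Finset.range m,
              (x' ^ (k'+1) * (if x' ∈ Set.Ico ((i:ℝ)/m) (((i:ℝ)+1)/m) then (1:ℝ) else 0)) *
              (x ^ (k+1) * (if x ∈ Set.Ico ((i:ℝ)/m) (((i:ℝ)+1)/m) then (1:ℝ) else 0)) := by
        funext x
        rw [Finset.mul_sum]
        exact Finset.sum_congr rfl fun i _ => by ring
      rw [hfe, intervalIntegral.integral_finset_sum]
      · exact Finset.sum_congr rfl fun i hi => by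
          rw [intervalIntegral.integral_const_mul, hA i hi k]
      · intro i _
        exact (integrable_ind_pow _ _ (k+1)).const_mul _
    simp only [hinner]
    rw [intervalIntegral.integral_finset_sum (fun i _ =>
      ((integrable_ind_pow _ _ (k'+1)).mul_const _)), Finset.mul_sum]
    refine Finset.sum_congr rfl fun i hi => ?_
    rw [intervalIntegral.integral_mul_const, hA i hi k']
    simp only [cfun]
    have e1 : ((k:ℝ)+1) ≠ 0 := by positivity
    have e2 : ((k:ℝ)+2) ≠ 0 := by positivity
    have e3 : ((k':ℝ)+1) ≠ 0 := by positivity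
    have e4 : ((k':ℝ)+2) ≠ 0 := by positivity
    field_simp
  have hnn : ∀ i ∈ Finset.range m, ∀ k : ℕ, 0 ≤ cfun m i k := by
    intro i hi k
    obtain ⟨h1, h2, _⟩ := hab i hi
    exact div_nonneg (sub_nonneg.2 (pow_le_pow_left₀ h1 h2 _)) (by positivity)
  have hcsum : ∀ i ∈ Finset.range m, HasSum (cfun m i)
      ((((i:ℝ)+1)/m + (1 - ((i:ℝ)+1)/m) * Real.log (1 - ((i:ℝ)+1)/m))
        - ((i:ℝ)/m + (1 - (i:ℝ)/m) * Real.log (1 - (i:ℝ)/m))) := by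
    intro i hi
    obtain ⟨h1, h2, h3⟩ := hab i hi
    have Hb := Shelp (h1.trans h2) h3
    have Ha := Shelp h1 (h2.trans h3)
    have hfun : (fun k : ℕ => (((i:ℝ)+1)/m) ^ (k+2) / (((k:ℝ)+1)*((k:ℝ)+2))
        - ((i:ℝ)/m) ^ (k+2) / (((k:ℝ)+1)*((k:ℝ)+2))) = cfun m i := by
      funext k
      rw [← sub_div]
      rfl
    rw [← hfun]
    exact Hb.sub Ha
  have hsummand : ∀ i ∈ Finset.range m,
      Summable (fun p : ℕ × ℕ => cfun m i p.1 * cfun m i p.2) := by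
    intro i hi
    exact Summable.mul_of_nonneg (hcsum i hi).summable (hcsum i hi).summable
      (fun k => hnn i hi k) (fun k => hnn i hi k)
  have htotal : Summable (fun p : ℕ × ℕ => ∑ i ∈ Finset.range m, cfun m i p.1 * cfun m i p.2) :=
    summable_sum hsummand
  constructor
  · exact (summable_congr key).2 htotal
  · rw [tsum_congr key, Summable.tsum_finsetSum hsummand]
    refine Finset.sum_congr rfl fun i hi => ?_
    have h := (hcsum i hi).mul (hcsum i hi) (hsummand i hi)
    rw [h.tsum_eq, sq]
end

section
/- Let d be a natural number, c a real number, and k' a positive integer. Then Σ_{k=1}^∞ (1/k) · ∫₀¹ ∫₀¹ x^k y^{k'} (x·y + c)^d dx dy = Σ_{i=0}^{d} C(d, i) · c^{d−i} · H_{i+1} / ( (i+1)·(k'+i+1) ), with the left-hand series converging, where C(d,i) is the binomial coefficient and H_n = Σ_{j=1}^{n} 1/j is the n-th harmonic number. -/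
open Finset intervalIntegral Filter Topology

lemma summable_aux (i : ℕ) :
    Summable (fun k : ℕ => 1 / (((k : ℝ) + 1) * ((k : ℝ) + (i : ℝ) + 2))) := by
  have hbase : Summable (fun k : ℕ => 1 / ((k : ℝ) + 1) ^ 2) := by
    have := Real.summable_one_div_nat_pow.mpr (le_refl 2)
    have := (summable_nat_add_iff 1).mpr this
    simpa [add_comm] using this
  refine Summable.of_nonneg_of_le (fun k => by positivity) (fun k => ?_) hbase
  rw [div_le_div_iff₀ (by positivity) (by positivity)]
  nlinarith [Nat.cast_nonneg (α := ℝ) i, Nat.cast_nonneg (α := ℝ) k]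

lemma tsum_aux (i : ℕ) :
    ∑' k : ℕ, 1 / (((k : ℝ) + 1) * ((k : ℝ) + (i : ℝ) + 2)) =
      (∑ j ∈ Finset.range (i + 1), 1 / ((j : ℝ) + 1)) / ((i : ℝ) + 1) := by
  set f : ℕ → ℝ := fun k => 1 / (((k : ℝ) + 1) * ((k : ℝ) + (i : ℝ) + 2)) with hf
  set g : ℕ → ℝ := fun k => (∑ j ∈ Finset.range (i + 1), 1 / ((k : ℝ) + (j : ℝ) + 1)) / ((i : ℝ) + 1) with hg
  have hfg : ∀ k, f k = g k - g (k + 1) := by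
    intro k
    have htel : ∑ j ∈ Finset.range (i + 1),
        (1 / ((k : ℝ) + (j : ℝ) + 1) - 1 / ((k : ℝ) + 1 + (j : ℝ) + 1)) =
        1 / ((k : ℝ) + 1) - 1 / ((k : ℝ) + (i : ℝ) + 2) := by
      have := Finset.sum_range_sub' (f := fun j : ℕ => 1 / ((k : ℝ) + (j : ℝ) + 1)) (n := i + 1)
      push_cast at this
      rw [show (1:ℝ) / ((k:ℝ) + 1) - 1 / ((k:ℝ) + (i:ℝ) + 2)
          = 1 / ((k:ℝ) + 0 + 1) - 1 / ((k:ℝ) + ((i:ℝ) + 1) + 1) by ring_nf, ← this]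
      apply Finset.sum_congr rfl
      intro j _
      ring_nf
    simp only [hf, hg]
    push_cast
    rw [div_sub_div_same, ← Finset.sum_sub_distrib, htel]
    have hk1 : ((k:ℝ)+1) ≠ 0 := by positivity
    have hk2 : ((k:ℝ)+(i:ℝ)+2) ≠ 0 := by positivity
    have hi1 : ((i:ℝ)+1) ≠ 0 := by positivity
    field_simp
    ring
  have hg0 : g 0 = (∑ j ∈ Finset.range (i + 1), 1 / ((j : ℝ) + 1)) / ((i : ℝ) + 1) := by
    simp only [hg, Nat.cast_zero, zero_add]
  have htend : Tendsto g atTop (𝓝 0) := by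
    have hsum : Tendsto (fun k : ℕ => ∑ j ∈ Finset.range (i + 1), 1 / ((k : ℝ) + (j : ℝ) + 1))
        atTop (𝓝 (∑ j ∈ Finset.range (i + 1), (0:ℝ))) := by
      apply tendsto_finset_sum
      intro j _
      have h1 : Tendsto (fun k : ℕ => ((k : ℝ) + (j : ℝ) + 1)) atTop atTop :=
        tendsto_atTop_add_const_right _ _ (tendsto_atTop_add_const_right _ _ tendsto_natCast_atTop_atTop)
      simpa [one_div, Pi.inv_def] using h1.inv_tendsto_atTop
    have := hsum.div_const ((i : ℝ) + 1)
    simpa [hg] using this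
  have hpartial : ∀ n, ∑ k ∈ Finset.range n, f k = g 0 - g n := by
    intro n
    simp_rw [hfg]
    exact Finset.sum_range_sub' g n
  have hlim : Tendsto (fun n => ∑ k ∈ Finset.range n, f k) atTop (𝓝 (g 0)) := by
    simp only [hpartial]
    simpa using tendsto_const_nhds.sub htend
  have := (summable_aux i).hasSum.tendsto_sum_nat
  exact (tendsto_nhds_unique this hlim).trans hg0

lemma poly_integral_eval (d : ℕ) (c : ℝ) (m k' : ℕ) :
    (∫ y in (0 : ℝ)..1, ∫ x in (0 : ℝ)..1, x ^ m * y ^ k' * (x * y + c) ^ d) =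
      ∑ i ∈ Finset.range (d + 1),
        (d.choose i : ℝ) * c ^ (d - i) * (1 / ((m : ℝ) + i + 1)) * (1 / ((k' : ℝ) + i + 1)) := by
  have hinner : ∀ y : ℝ, (∫ x in (0 : ℝ)..1, x ^ m * y ^ k' * (x * y + c) ^ d) =
      ∑ i ∈ Finset.range (d + 1),
        (d.choose i : ℝ) * c ^ (d - i) * (1 / ((m : ℝ) + i + 1)) * y ^ (k' + i) := by
    intro y
    have h1 : ∀ x : ℝ, x ^ m * y ^ k' * (x * y + c) ^ d =
        ∑ i ∈ Finset.range (d + 1),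
          ((d.choose i : ℝ) * c ^ (d - i) * y ^ (k' + i)) * x ^ (m + i) := by
      intro x
      rw [add_pow, Finset.mul_sum]
      refine Finset.sum_congr rfl fun i hi => ?_
      ring
    simp_rw [h1]
    rw [intervalIntegral.integral_finset_sum]
    · refine Finset.sum_congr rfl fun i hi => ?_
      rw [intervalIntegral.integral_const_mul, integral_pow]
      push_cast
      rw [one_pow, zero_pow (by omega)]
      ring
    · intro i hi
      exact (Continuous.intervalIntegrable (by continuity) _ _)
  simp_rw [hinner]
  rw [intervalIntegral.integral_finset_sum]
  · refine Finset.sum_congr rfl fun i hi => ?_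
    rw [intervalIntegral.integral_const_mul, integral_pow]
    push_cast
    rw [one_pow, zero_pow (by omega)]
    ring
  · intro i hi
    exact (Continuous.intervalIntegrable (by continuity) _ _)


/-- Kernel covariance between the infinite weighted sum of raw moments and the `k'`-th
raw-moment observation under the polynomial kernel:
`∑_{k ≥ 1} (1/k) ∫₀¹∫₀¹ x^k y^{k'} (xy+c)^d dx dy
  = ∑_{i=0}^d C(d,i) c^{d-i} H_{i+1} / ((i+1)(k'+i+1))`. -/
theorem polynomial_kernel_tsum_moment_integral (d : ℕ) (c : ℝ) (k' : ℕ) (hk' : 0 < k') :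
    Summable (fun k : ℕ => (1 / ((k : ℝ) + 1)) *
      ∫ y in (0 : ℝ)..1, ∫ x in (0 : ℝ)..1, x ^ (k + 1) * y ^ k' * (x * y + c) ^ d) ∧
    ∑' k : ℕ, (1 / ((k : ℝ) + 1)) *
      ∫ y in (0 : ℝ)..1, ∫ x in (0 : ℝ)..1, x ^ (k + 1) * y ^ k' * (x * y + c) ^ d =
      ∑ i ∈ Finset.range (d + 1),
        (d.choose i : ℝ) * c ^ (d - i) * (∑ j ∈ Finset.range (i + 1), 1 / ((j : ℝ) + 1)) /
          (((i : ℝ) + 1) * ((k' : ℝ) + (i : ℝ) + 1)) := by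
  have hint : ∀ k : ℕ, (1 / ((k : ℝ) + 1)) *
      (∫ y in (0 : ℝ)..1, ∫ x in (0 : ℝ)..1, x ^ (k + 1) * y ^ k' * (x * y + c) ^ d) =
      ∑ i ∈ Finset.range (d + 1),
        ((d.choose i : ℝ) * c ^ (d - i) / ((k' : ℝ) + i + 1)) *
          (1 / (((k : ℝ) + 1) * ((k : ℝ) + (i : ℝ) + 2))) := by
    intro k
    rw [poly_integral_eval d c (k + 1) k', Finset.mul_sum]
    refine Finset.sum_congr rfl fun i hi => ?_
    push_cast
    simp only [one_div, mul_inv]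
    ring
  have hsumm : ∀ i ∈ Finset.range (d + 1),
      Summable (fun k : ℕ => ((d.choose i : ℝ) * c ^ (d - i) / ((k' : ℝ) + i + 1)) *
        (1 / (((k : ℝ) + 1) * ((k : ℝ) + (i : ℝ) + 2)))) :=
    fun i _ => (summable_aux i).mul_left _
  have hS := summable_sum hsumm
  constructor
  · exact hS.congr fun k => (hint k).symm
  · rw [tsum_congr hint, Summable.tsum_finsetSum hsumm]
    refine Finset.sum_congr rfl fun i hi => ?_
    rw [tsum_mul_left, tsum_aux i]
    rw [div_mul_div_comm]
    ring
end

section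
/- Let d be a natural number and c a real number. Then Σ_{k=1}^∞ Σ_{k'=1}^∞ (1/(k·k')) · ∫₀¹ ∫₀¹ x^k y^{k'} (x·y + c)^d dx dy = Σ_{i=0}^{d} C(d, i) · c^{d−i} · ( H_{i+1} / (i+1) )², with the left-hand double series converging, where C(d,i) is the binomial coefficient and H_n = Σ_{j=1}^{n} 1/j is the n-th harmonic number. -/
open Finset Filter intervalIntegral

lemma auxHasSum (i : ℕ) :
    HasSum (fun k : ℕ => 1 / (((k:ℝ)+1) * ((k:ℝ)+(i:ℝ)+2)))
      ((∑ j ∈ Finset.range (i+1), 1 / ((j:ℝ)+1)) / ((i:ℝ)+1)) := by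
  set F : ℕ → ℝ := fun k => ∑ j ∈ Finset.range (i+1), 1 / ((k:ℝ)+(j:ℝ)+1) with hF
  have hterm : ∀ k : ℕ, 1 / (((k:ℝ)+1) * ((k:ℝ)+(i:ℝ)+2)) = (F k - F (k+1)) / ((i:ℝ)+1) := by
    intro k
    have h1 : F k - F (k+1) = 1/((k:ℝ)+1) - 1/((k:ℝ)+(i:ℝ)+2) := by
      have : F (k+1) = ∑ j ∈ Finset.range (i+1), 1/((k:ℝ)+((j:ℝ)+1)+1) := by
        simp [hF]; apply Finset.sum_congr rfl; intro j _; ring_nf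
      rw [this, hF]
      rw [← Finset.sum_sub_distrib]
      have := Finset.sum_range_sub' (f := fun j : ℕ => 1/((k:ℝ)+(j:ℝ)+1)) (n := i+1)
      convert this using 2 <;> push_cast <;> ring
    rw [h1]
    have hk1 : ((k:ℝ)+1) ≠ 0 := by positivity
    have hk2 : ((k:ℝ)+(i:ℝ)+2) ≠ 0 := by positivity
    have hi1 : ((i:ℝ)+1) ≠ 0 := by positivity
    field_simp
    ring
  have hnonneg : ∀ k : ℕ, 0 ≤ 1 / (((k:ℝ)+1) * ((k:ℝ)+(i:ℝ)+2)) := by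
    intro k; positivity
  rw [hasSum_iff_tendsto_nat_of_nonneg hnonneg]
  have hps : ∀ n : ℕ, ∑ k ∈ Finset.range n, 1 / (((k:ℝ)+1) * ((k:ℝ)+(i:ℝ)+2))
      = (F 0 - F n) / ((i:ℝ)+1) := by
    intro n
    simp_rw [hterm]
    rw [← Finset.sum_div, Finset.sum_range_sub']
  simp_rw [hps]
  have hF0 : F 0 = ∑ j ∈ Finset.range (i+1), 1 / ((j:ℝ)+1) := by
    simp [hF]
  have hFtend : Tendsto F atTop (nhds 0) := by
    have : Tendsto F atTop (nhds (∑ j ∈ Finset.range (i+1), (0:ℝ))) := by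
      apply tendsto_finset_sum
      intro j _
      have h1 : Tendsto (fun k : ℕ => (k:ℝ)+(j:ℝ)+1) atTop atTop := by
        apply tendsto_atTop_add_const_right
        apply tendsto_atTop_add_const_right
        exact tendsto_natCast_atTop_atTop
      simpa [one_div, Pi.inv_def] using h1.inv_tendsto_atTop
    simpa using this
  rw [← hF0]
  have := (tendsto_const_nhds (x := F 0) (f := atTop (α := ℕ))).sub hFtend
  simpa using this.div_const ((i:ℝ)+1)

lemma auxIntegral (d : ℕ) (c : ℝ) (k k' : ℕ) :
    (∫ y in (0:ℝ)..1, ∫ x in (0:ℝ)..1, x ^ (k+1) * y ^ (k'+1) * (x*y+c) ^ d)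
      = ∑ i ∈ Finset.range (d+1),
        (d.choose i : ℝ) * c ^ (d-i) * (1/((k:ℝ)+(i:ℝ)+2)) * (1/((k':ℝ)+(i:ℝ)+2)) := by
  have hx : ∀ y : ℝ, (∫ x in (0:ℝ)..1, x ^ (k+1) * y ^ (k'+1) * (x*y+c) ^ d)
      = ∑ i ∈ Finset.range (d+1),
        (d.choose i : ℝ) * c ^ (d-i) * y ^ (k'+1+i) * (1/((k:ℝ)+(i:ℝ)+2)) := by
    intro y
    have hpt : ∀ x : ℝ, x ^ (k+1) * y ^ (k'+1) * (x*y+c) ^ d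
        = ∑ i ∈ Finset.range (d+1),
          ((d.choose i : ℝ) * c ^ (d-i) * y ^ (k'+1+i)) * x ^ (k+1+i) := by
      intro x
      rw [add_pow, Finset.mul_sum]
      apply Finset.sum_congr rfl
      intro i _
      rw [mul_pow]
      ring
    simp_rw [hpt]
    rw [intervalIntegral.integral_finset_sum]
    · apply Finset.sum_congr rfl
      intro i _
      rw [intervalIntegral.integral_const_mul, integral_pow]
      have : ((k+1+i : ℕ) : ℝ) + 1 = (k:ℝ)+(i:ℝ)+2 := by push_cast; ring
      rw [this]
      simp
    · intro i _
      exact (Continuous.intervalIntegrable (by continuity) 0 1)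
  simp_rw [hx]
  rw [intervalIntegral.integral_finset_sum]
  · apply Finset.sum_congr rfl
    intro i _
    have : (fun y : ℝ => (d.choose i : ℝ) * c ^ (d-i) * y ^ (k'+1+i) * (1/((k:ℝ)+(i:ℝ)+2)))
        = fun y : ℝ => ((d.choose i : ℝ) * c ^ (d-i) * (1/((k:ℝ)+(i:ℝ)+2))) * y ^ (k'+1+i) := by
      funext y; ring
    rw [this, intervalIntegral.integral_const_mul, integral_pow]
    have h2 : ((k'+1+i : ℕ) : ℝ) + 1 = (k':ℝ)+(i:ℝ)+2 := by push_cast; ring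
    rw [h2]
    simp
  · intro i _
    exact (Continuous.intervalIntegrable (by continuity) 0 1)

/-- Prior variance term of the infinite weighted sum of raw moments under the polynomial
kernel: `∑_{k,k' ≥ 1} (1/(k k')) ∫₀¹∫₀¹ x^k y^{k'} (xy+c)^d dx dy
  = ∑_{i=0}^d C(d,i) c^{d-i} (H_{i+1}/(i+1))²`. -/
theorem polynomial_kernel_double_tsum_moment_integral (d : ℕ) (c : ℝ) :
    Summable (fun p : ℕ × ℕ => (1 / (((p.1 : ℝ) + 1) * ((p.2 : ℝ) + 1))) *
      ∫ y in (0 : ℝ)..1, ∫ x in (0 : ℝ)..1,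
        x ^ (p.1 + 1) * y ^ (p.2 + 1) * (x * y + c) ^ d) ∧
    ∑' p : ℕ × ℕ, (1 / (((p.1 : ℝ) + 1) * ((p.2 : ℝ) + 1))) *
      ∫ y in (0 : ℝ)..1, ∫ x in (0 : ℝ)..1,
        x ^ (p.1 + 1) * y ^ (p.2 + 1) * (x * y + c) ^ d =
      ∑ i ∈ Finset.range (d + 1),
        (d.choose i : ℝ) * c ^ (d - i) *
          ((∑ j ∈ Finset.range (i + 1), 1 / ((j : ℝ) + 1)) / ((i : ℝ) + 1)) ^ 2 := by
  set b : ℕ → ℕ → ℝ := fun i k => 1 / (((k:ℝ)+1) * ((k:ℝ)+(i:ℝ)+2)) with hb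
  have hrw : (fun p : ℕ × ℕ => (1 / (((p.1 : ℝ) + 1) * ((p.2 : ℝ) + 1))) *
      ∫ y in (0 : ℝ)..1, ∫ x in (0 : ℝ)..1,
        x ^ (p.1 + 1) * y ^ (p.2 + 1) * (x * y + c) ^ d)
      = fun p : ℕ × ℕ => ∑ i ∈ Finset.range (d+1),
          ((d.choose i : ℝ) * c ^ (d-i)) * (b i p.1 * b i p.2) := by
    funext p
    rw [auxIntegral d c p.1 p.2, Finset.mul_sum]
    apply Finset.sum_congr rfl
    intro i _
    simp only [hb]
    have h1 : ((p.1:ℝ)+1) ≠ 0 := by positivity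
    have h2 : ((p.2:ℝ)+1) ≠ 0 := by positivity
    have h3 : ((p.1:ℝ)+(i:ℝ)+2) ≠ 0 := by positivity
    have h4 : ((p.2:ℝ)+(i:ℝ)+2) ≠ 0 := by positivity
    field_simp
  have hsb : ∀ i : ℕ, Summable (b i) := fun i => (auxHasSum i).summable
  have hsprod : ∀ i : ℕ, Summable (fun p : ℕ × ℕ => b i p.1 * b i p.2) := by
    intro i
    exact Summable.mul_of_nonneg (hsb i) (hsb i)
      (fun k => by simp only [hb]; positivity) (fun k => by simp only [hb]; positivity)
  have hsum : ∀ i ∈ Finset.range (d+1),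
      Summable (fun p : ℕ × ℕ => ((d.choose i : ℝ) * c ^ (d-i)) * (b i p.1 * b i p.2)) :=
    fun i _ => (hsprod i).mul_left _
  constructor
  · rw [hrw]
    exact summable_sum hsum
  · rw [hrw, Summable.tsum_finsetSum hsum]
    apply Finset.sum_congr rfl
    intro i _
    rw [tsum_mul_left, ← Summable.tsum_mul_tsum (hsb i) (hsb i) (hsprod i),
      (auxHasSum i).tsum_eq]
    ring
end

section
/- Let ν ≥ 0 be a real number and m ≥ 1 an integer, let Γ denote the real Gamma function, and define the digamma function ψ(x) as the derivative at x of the function t ↦ log Γ(t). Then ∫₀¹ λ^{ν+1/2} · ( Σ_{j=m}^∞ λ^j / j ) dλ = ( ψ(m + ν + 3/2) − ψ(m) ) / ( ν + 3/2 ), where the inner series converges for every λ ∈ [0,1) and the integral is finite. -/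
open Filter Finset MeasureTheory

private lemma ttee_base_summable : Summable (fun k : ℕ => (((k:ℝ)+1) * ((k:ℝ)+1))⁻¹) := by
  have h := Real.summable_one_div_nat_pow.mpr (by norm_num : (1:ℕ) < 2)
  have h2 := (summable_nat_add_iff 1).mpr h
  apply h2.congr
  intro k
  push_cast
  rw [one_div, sq]

private lemma ttee_shift_summable (a : ℝ) (ha : 0 < a) :
    Summable (fun k : ℕ => ((a + k) * (a + k))⁻¹) := by
  apply (summable_nat_add_iff 1).mp
  apply Summable.of_nonneg_of_le (fun k => by positivity) (fun k => ?_) ttee_base_summable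
  have hk : ((k:ℝ)+1) ≤ a + (k+1 : ℕ) := by push_cast; linarith
  have h0 : (0:ℝ) < (k:ℝ) + 1 := by positivity
  gcongr

private lemma ttee_hasDerivAt_logGammaSeq (a t : ℝ) (ht : 0 < t + a) (n : ℕ) :
    HasDerivAt (fun t : ℝ => Real.BohrMollerup.logGammaSeq (t + a) n)
      (Real.log n - ∑ k ∈ Finset.range (n+1), (t + a + k)⁻¹) t := by
  have hA : HasDerivAt (fun t : ℝ => (t + a) * Real.log n + Real.log (Nat.factorial n))
      (Real.log n) t := by
    simpa using (((hasDerivAt_id t).add_const a).mul_const (Real.log n)).add_const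
      (Real.log (Nat.factorial n))
  have hC : HasDerivAt (fun t : ℝ => ∑ k ∈ Finset.range (n+1), Real.log (t + a + k))
      (∑ k ∈ Finset.range (n+1), (t + a + k)⁻¹) t := by
    apply HasDerivAt.fun_sum
    intro k _
    have hne : t + a + k ≠ 0 := by positivity
    have h := (((hasDerivAt_id t).add_const a).add_const (k:ℝ)).log hne
    simpa using h
  have := hA.sub hC
  apply this.congr_deriv ?_ |>.congr_of_eventuallyEq ?_
  · rfl
  · filter_upwards with y
    simp [Real.BohrMollerup.logGammaSeq]

private lemma ttee_hasDerivAt_logGamma_shift_sub (c : ℝ) (hc : 0 < c) (x : ℝ) (hx : 0 < x) :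
    HasDerivAt (fun t : ℝ => Real.log (Real.Gamma (t + c)) - Real.log (Real.Gamma t))
      (∑' k : ℕ, ((x + k)⁻¹ - (x + c + k)⁻¹)) x := by
  set s : Set ℝ := Set.Ioo (x/2) (x+1) with hs_def
  have hs : IsOpen s := isOpen_Ioo
  have hxs : x ∈ s := ⟨by linarith, by linarith⟩
  have hpos : ∀ t ∈ s, 0 < t := fun t ht => lt_trans (by linarith) ht.1
  have hu : Summable (fun k : ℕ => c * ((x/2 + k) * (x/2 + k))⁻¹) :=
    (ttee_shift_summable (x/2) (by linarith)).mul_left c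
  have hb : ∀ (k : ℕ) (t : ℝ), t ∈ s →
      ‖(t + k)⁻¹ - (t + c + k)⁻¹‖ ≤ c * ((x/2 + k) * (x/2 + k))⁻¹ := by
    intro k t ht
    have ht0 : 0 < t := hpos t ht
    have h1 : (0:ℝ) < t + k := by positivity
    have h2 : (0:ℝ) < t + c + k := by positivity
    have h3 : (0:ℝ) < x/2 + k := by positivity
    have heq : (t + k)⁻¹ - (t + c + k)⁻¹ = c / ((t + k) * (t + c + k)) := by
      field_simp
      ring
    rw [heq, Real.norm_eq_abs, abs_of_nonneg (by positivity), div_eq_mul_inv]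
    have hle : (x/2 + k) * (x/2 + k) ≤ (t + k) * (t + c + k) := by
      have h4 : x/2 + k ≤ t + k := by have := ht.1; linarith
      have h5 : x/2 + k ≤ t + c + k := by have := ht.1; linarith
      exact mul_le_mul h4 h5 h3.le h1.le
    gcongr
  have base := tendstoUniformlyOn_tsum_nat hu hb (s := s)
  have hunif : TendstoUniformlyOn
      (fun (n : ℕ) (t : ℝ) => ∑ k ∈ Finset.range (n+1), ((t + k)⁻¹ - (t + c + k)⁻¹))
      (fun (t : ℝ) => ∑' k : ℕ, ((t + k)⁻¹ - (t + c + k)⁻¹)) atTop s := by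
    intro u hu'
    exact (tendsto_add_atTop_nat 1).eventually (base u hu')
  apply hasDerivAt_of_tendstoUniformlyOn (f := fun (n : ℕ) (t : ℝ) =>
      Real.BohrMollerup.logGammaSeq (t + c) n - Real.BohrMollerup.logGammaSeq t n)
      hs hunif ?_ ?_ hxs
  · filter_upwards with n t ht
    have ht0 : 0 < t := hpos t ht
    have h1 := ttee_hasDerivAt_logGammaSeq c t (by linarith) n
    have h2 := ttee_hasDerivAt_logGammaSeq 0 t (by linarith) n
    simp only [add_zero] at h2
    have h3 := h1.sub h2
    apply h3.congr_deriv
    rw [Finset.sum_sub_distrib]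
    ring_nf
  · intro t ht
    have ht0 : 0 < t := hpos t ht
    exact (Real.BohrMollerup.tendsto_log_gamma (by linarith : (0:ℝ) < t + c)).sub
      (Real.BohrMollerup.tendsto_log_gamma ht0)

private lemma ttee_psi_diff (c : ℝ) (hc : 0 < c) (x : ℝ) (hx : 0 < x) :
    deriv (fun t : ℝ => Real.log (Real.Gamma t)) (x + c)
      - deriv (fun t : ℝ => Real.log (Real.Gamma t)) x
      = ∑' k : ℕ, ((x + k)⁻¹ - (x + c + k)⁻¹) := by
  have hdiff : ∀ y : ℝ, 0 < y → DifferentiableAt ℝ (fun t : ℝ => Real.log (Real.Gamma t)) y := by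
    intro y hy
    have h1 : DifferentiableAt ℝ Real.Gamma y := by
      apply Real.differentiableAt_Gamma
      intro n hn
      have : (0:ℝ) ≤ (n:ℝ) := Nat.cast_nonneg n
      rw [hn] at hy
      linarith
    exact h1.log (Real.Gamma_pos_of_pos hy).ne'
  have h1 := (hdiff (x + c) (by linarith)).hasDerivAt
  have h2 := (hdiff x hx).hasDerivAt
  have h3 : HasDerivAt (fun t : ℝ => Real.log (Real.Gamma (t + c)))
      (deriv (fun t : ℝ => Real.log (Real.Gamma t)) (x + c)) x := by
    have h := HasDerivAt.comp x h1 ((hasDerivAt_id x).add_const c)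
    rw [mul_one] at h
    exact h
  exact (h3.sub h2).unique (ttee_hasDerivAt_logGamma_shift_sub c hc x hx)

private lemma ttee_per_j_val (ν : ℝ) (hν : 0 ≤ ν) (m : ℕ) (hm : 1 ≤ m) (j : ℕ) :
    ∫ l in (0:ℝ)..1, l ^ (ν+1/2) * (l ^ (j+m) / ((j:ℝ)+m))
      = (((j:ℝ)+m+(ν+3/2)) * ((j:ℝ)+m))⁻¹ := by
  have hm0 : (0:ℝ) < m := by exact_mod_cast hm
  have hD : (0:ℝ) < (j:ℝ)+m := by positivity
  have hq : (0:ℝ) < ν + 1/2 + ((j:ℝ)+m) := by positivity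
  have hEq : Set.EqOn (fun l : ℝ => l ^ (ν+1/2) * (l ^ (j+m) / ((j:ℝ)+m)))
      (fun l : ℝ => l ^ (ν + 1/2 + ((j:ℝ)+m)) / ((j:ℝ)+m)) (Set.uIcc 0 1) := by
    intro l hl
    rw [Set.uIcc_of_le (by norm_num : (0:ℝ) ≤ 1)] at hl
    rcases eq_or_lt_of_le hl.1 with h0 | h0
    · simp only [← h0]
      rw [Real.zero_rpow (by linarith : ν+(1:ℝ)/2 ≠ 0), Real.zero_rpow hq.ne',
        zero_pow (by omega : j + m ≠ 0)]
      simp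
    · simp only
      rw [← Real.rpow_natCast l (j+m), mul_div_assoc', ← Real.rpow_add h0]
      push_cast
      ring_nf
  rw [intervalIntegral.integral_congr hEq, intervalIntegral.integral_div,
    integral_rpow (Or.inl (by linarith : (-1:ℝ) < ν + 1/2 + ((j:ℝ)+m))),
    Real.one_rpow, Real.zero_rpow (by positivity : ν + 1/2 + ((j:ℝ)+m) + 1 ≠ 0)]
  rw [mul_inv, sub_zero, div_div, one_div, mul_inv]
  congr 1
  ring

/-- Expected absolute Taylor truncation error for a `ν`-continuous kernel: with `ψ` the
digamma function (derivative of `log ∘ Γ`), for `ν ≥ 0` and `m ≥ 1`,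
`∫₀¹ λ^{ν+1/2} ∑_{j ≥ m} λ^j/j dλ = (ψ(m+ν+3/2) - ψ(m)) / (ν+3/2)`,
the inner series converging on `[0,1)` and the integrand being integrable. -/
theorem taylor_truncation_expected_error (ν : ℝ) (hν : 0 ≤ ν) (m : ℕ) (hm : 1 ≤ m)
    (ψ : ℝ → ℝ) (hψ : ∀ x : ℝ, ψ x = deriv (fun t : ℝ => Real.log (Real.Gamma t)) x) :
    (∀ l ∈ Set.Ico (0 : ℝ) 1, Summable (fun j : ℕ => l ^ (j + m) / ((j : ℝ) + (m : ℝ)))) ∧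
    IntervalIntegrable
      (fun l : ℝ => l ^ (ν + 1 / 2) * ∑' j : ℕ, l ^ (j + m) / ((j : ℝ) + (m : ℝ)))
      MeasureTheory.volume 0 1 ∧
    ∫ l in (0 : ℝ)..1, l ^ (ν + 1 / 2) * ∑' j : ℕ, l ^ (j + m) / ((j : ℝ) + (m : ℝ)) =
      (ψ ((m : ℝ) + ν + 3 / 2) - ψ (m : ℝ)) / (ν + 3 / 2) := by
  have hm0 : (0:ℝ) < m := by exact_mod_cast hm
  set c : ℝ := ν + 3/2 with hc_def
  have hc : 0 < c := by rw [hc_def]; linarith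
  have hm1 : (1:ℝ) ≤ (m:ℝ) := by exact_mod_cast hm
  -- Part 1 : summability on [0,1)
  have part1 : ∀ l ∈ Set.Ico (0 : ℝ) 1,
      Summable (fun j : ℕ => l ^ (j + m) / ((j : ℝ) + (m : ℝ))) := by
    intro l hl
    apply Summable.of_nonneg_of_le
      (fun j => div_nonneg (pow_nonneg hl.1 _) (by positivity)) (fun j => ?_)
      (summable_geometric_of_lt_one hl.1 hl.2)
    have h2 : (1:ℝ) ≤ (j:ℝ) + m := by
      have : (0:ℝ) ≤ (j:ℝ) := Nat.cast_nonneg j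
      linarith
    calc l ^ (j+m) / ((j:ℝ)+m) ≤ l ^ (j+m) := div_le_self (pow_nonneg hl.1 _) h2
      _ ≤ l ^ j := pow_le_pow_of_le_one hl.1 hl.2.le (by omega)
  -- common setup
  set F : ℕ → ℝ → ℝ := fun j l => l ^ (ν+1/2) * (l ^ (j+m) / ((j:ℝ)+m)) with hF_def
  have hFeq : (fun l : ℝ => l ^ (ν + 1/2) * ∑' j : ℕ, l ^ (j+m) / ((j:ℝ)+(m:ℝ)))
      = fun l => ∑' j, F j l := by
    funext l
    exact tsum_mul_left.symm
  have hFcont : ∀ j, Continuous (F j) := fun j =>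
    (Real.continuous_rpow_const (by linarith)).mul ((continuous_pow (j+m)).div_const _)
  have hFint : ∀ j, IntegrableOn (F j) (Set.Ioc (0:ℝ) 1) volume := fun j =>
    (hFcont j).integrableOn_Ioc
  have hI : ∀ j : ℕ, ∫ l in Set.Ioc (0:ℝ) 1, F j l = (((j:ℝ)+m+c) * ((j:ℝ)+m))⁻¹ := by
    intro j
    rw [← intervalIntegral.integral_of_le (by norm_num : (0:ℝ) ≤ 1)]
    exact ttee_per_j_val ν hν m hm j
  have hIsum : Summable (fun j : ℕ => (((j:ℝ)+m+c) * ((j:ℝ)+m))⁻¹) := by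
    apply Summable.of_nonneg_of_le (fun j => by positivity) (fun j => ?_) ttee_base_summable
    have hj0 : (0:ℝ) ≤ (j:ℝ) := Nat.cast_nonneg j
    have ha : ((j:ℝ)+1) ≤ (j:ℝ)+m := by linarith
    have hb : ((j:ℝ)+1) ≤ (j:ℝ)+m+c := by linarith
    have hp : (0:ℝ) < (j:ℝ)+1 := by positivity
    gcongr
  have hnn : ∀ j : ℕ, 0 ≤ᵐ[volume.restrict (Set.Ioc (0:ℝ) 1)] F j := by
    intro j
    filter_upwards [ae_restrict_mem measurableSet_Ioc] with x hx
    have hx0 : (0:ℝ) ≤ x := hx.1.le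
    exact mul_nonneg (Real.rpow_nonneg hx0 _) (div_nonneg (pow_nonneg hx0 _) (by positivity))
  have hnorm : ∀ j : ℕ, ∫ l in Set.Ioc (0:ℝ) 1, ‖F j l‖ = (((j:ℝ)+m+c) * ((j:ℝ)+m))⁻¹ := by
    intro j
    rw [← hI j]
    apply integral_congr_ae
    filter_upwards [hnn j] with x hx using Real.norm_of_nonneg hx
  have hae : ∀ᵐ x ∂(volume.restrict (Set.Ioc (0:ℝ) 1)), x ∈ Set.Ioo (0:ℝ) 1 := by
    have h1 : ∀ᵐ x : ℝ ∂volume, x ≠ 1 := by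
      rw [ae_iff]
      have : {x : ℝ | ¬ x ≠ 1} = {1} := by ext x; simp
      rw [this]
      exact measure_singleton 1
    filter_upwards [ae_restrict_mem measurableSet_Ioc, ae_restrict_of_ae h1] with x hx h1x
    exact ⟨hx.1, lt_of_le_of_ne hx.2 h1x⟩
  have hsummae : ∀ x ∈ Set.Ioo (0:ℝ) 1, Summable (fun j => F j x) := fun x hx =>
    (part1 x ⟨hx.1.le, hx.2⟩).mul_left _
  -- Part 2 : integrability
  have part2 : IntegrableOn (fun l => ∑' j, F j l) (Set.Ioc (0:ℝ) 1) volume := by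
    constructor
    · apply aestronglyMeasurable_of_tendsto_ae (f := fun n l => ∑ j ∈ Finset.range n, F j l) atTop
      · intro n
        exact (continuous_finset_sum _ fun j _ => hFcont j).aestronglyMeasurable
      · filter_upwards [hae] with x hx
        exact (hsummae x hx).hasSum.tendsto_sum_nat
    · rw [hasFiniteIntegral_iff_norm]
      have heq : ∀ᵐ x ∂(volume.restrict (Set.Ioc (0:ℝ) 1)),
          ENNReal.ofReal ‖∑' j, F j x‖ = ∑' j, ENNReal.ofReal (F j x) := by
        filter_upwards [hae] with x hx
        have hs := hsummae x hx
        have hnn' : ∀ j, 0 ≤ F j x := fun j =>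
          mul_nonneg (Real.rpow_nonneg hx.1.le _)
            (div_nonneg (pow_nonneg hx.1.le _) (by positivity))
        rw [Real.norm_of_nonneg (tsum_nonneg hnn'), ENNReal.ofReal_tsum_of_nonneg hnn' hs]
      rw [lintegral_congr_ae heq,
        lintegral_tsum (fun j => ((hFcont j).measurable.ennreal_ofReal).aemeasurable)]
      have hv : ∀ j : ℕ, ∫⁻ x in Set.Ioc (0:ℝ) 1, ENNReal.ofReal (F j x)
          = ENNReal.ofReal ((((j:ℝ)+m+c) * ((j:ℝ)+m))⁻¹) := by
        intro j
        rw [← ofReal_integral_eq_lintegral_ofReal (hFint j) (hnn j), hI j]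
      simp only [hv]
      rw [← ENNReal.ofReal_tsum_of_nonneg (fun j => by positivity) hIsum]
      exact ENNReal.ofReal_lt_top
  refine ⟨part1, ?_, ?_⟩
  · rw [intervalIntegrable_iff_integrableOn_Ioc_of_le (by norm_num : (0:ℝ) ≤ 1), hFeq]
    exact part2
  · -- the integral identity
    rw [intervalIntegral.integral_of_le (by norm_num : (0:ℝ) ≤ 1)]
    have hint : ∫ l in Set.Ioc (0:ℝ) 1, l ^ (ν + 1/2) * ∑' j : ℕ, l ^ (j+m) / ((j:ℝ)+(m:ℝ))
        = ∑' j : ℕ, (((j:ℝ)+m+c) * ((j:ℝ)+m))⁻¹ := by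
      have hswap := integral_tsum_of_summable_integral_norm (F := F)
        (μ := volume.restrict (Set.Ioc (0:ℝ) 1)) hFint
        (by exact hIsum.congr fun j => (hnorm j).symm)
      rw [hFeq, ← hswap]
      exact tsum_congr hI
    rw [hint]
    have hpsi := ttee_psi_diff c hc (m:ℝ) hm0
    have harg : (m:ℝ) + ν + 3/2 = (m:ℝ) + c := by rw [hc_def]; ring
    rw [hψ, hψ, harg, hpsi]
    have hterm : ∀ j : ℕ, (((j:ℝ)+m+c) * ((j:ℝ)+m))⁻¹
        = (((m:ℝ)+j)⁻¹ - ((m:ℝ)+c+j)⁻¹) / c := by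
      intro j
      have hj0 : (0:ℝ) ≤ (j:ℝ) := Nat.cast_nonneg j
      have h1 : ((m:ℝ)+j) ≠ 0 := by positivity
      have h2 : ((m:ℝ)+c+j) ≠ 0 := by positivity
      field_simp
      ring
    rw [tsum_congr hterm, tsum_div_const]
end
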